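/- Approximate projection consequence: let w ∈ ℝ^n, let Γ and R be subsets of indices with orthogonal projections P_Γ and P_R onto the corresponding coordinate subspaces, and suppose η ≥ 1 satisfies ‖w - P_Γ w‖₂ ≤ η ‖w - P_R w‖₂. Then ‖P_R w‖₂² ≤ ‖P_Γ w‖₂² + ((η² - 1)/η²) ‖w - P_Γ w‖₂². -/

import Mathlib

theorem approx_projection_sq_bound {n : ℕ}
    (Γ R : Submodule ℝ (EuclideanSpace ℝ (Fin n)))
    (w : EuclideanSpace ℝ (Fin n)) (η : ℝ) (hη : 1 ≤ η)
    (h : ‖w - (Submodule.orthogonalProjectionOnto Γ w : EuclideanSpace ℝ (Fin n))‖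
        ≤ η * ‖w - (Submodule.orthogonalProjectionOnto R w : EuclideanSpace ℝ (Fin n))‖) :
    ‖(Submodule.orthogonalProjectionOnto R w : EuclideanSpace ℝ (Fin n))‖ ^ 2
      ≤ ‖(Submodule.orthogonalProjectionOnto Γ w : EuclideanSpace ℝ (Fin n))‖ ^ 2
        + (η ^ 2 - 1) / η ^ 2 *
          ‖w - (Submodule.orthogonalProjectionOnto Γ w : EuclideanSpace ℝ (Fin n))‖ ^ 2 := by
  have hΓ := Submodule.norm_sq_eq_add_norm_sq_projection w Γ
  have hR := Submodule.norm_sq_eq_add_norm_sq_projection w R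
  rw [show ‖(Submodule.orthogonalProjectionOnto Γᗮ) w‖ = ‖w - (Submodule.orthogonalProjectionOnto Γ w : EuclideanSpace ℝ (Fin n))‖ by
      rw [Submodule.orthogonalProjectionOnto_orthogonal (K := Γ)]; rfl] at hΓ
  rw [show ‖(Submodule.orthogonalProjectionOnto Rᗮ) w‖ = ‖w - (Submodule.orthogonalProjectionOnto R w : EuclideanSpace ℝ (Fin n))‖ by
      rw [Submodule.orthogonalProjectionOnto_orthogonal (K := R)]; rfl] at hR
  have hη0 : (0:ℝ) < η := lt_of_lt_of_le one_pos hη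
  have hsq : ‖w - (Submodule.orthogonalProjectionOnto Γ w : EuclideanSpace ℝ (Fin n))‖ ^ 2
      ≤ η ^ 2 * ‖w - (Submodule.orthogonalProjectionOnto R w : EuclideanSpace ℝ (Fin n))‖ ^ 2 := by
    have := mul_self_le_mul_self (norm_nonneg _) h
    nlinarith [norm_nonneg (w - (Submodule.orthogonalProjectionOnto R w : EuclideanSpace ℝ (Fin n)))]
  have hη2 : (0:ℝ) < η ^ 2 := by positivity
  have key : ‖w - (Submodule.orthogonalProjectionOnto Γ w : EuclideanSpace ℝ (Fin n))‖ ^ 2 / η ^ 2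
      ≤ ‖w - (Submodule.orthogonalProjectionOnto R w : EuclideanSpace ℝ (Fin n))‖ ^ 2 :=
    (div_le_iff₀ hη2).mpr (by linarith [mul_comm (η^2) (‖w - (Submodule.orthogonalProjectionOnto R w : EuclideanSpace ℝ (Fin n))‖ ^ 2)])
  have hd : (η ^ 2 - 1) / η ^ 2 * ‖w - (Submodule.orthogonalProjectionOnto Γ w : EuclideanSpace ℝ (Fin n))‖ ^ 2
      = ‖w - (Submodule.orthogonalProjectionOnto Γ w : EuclideanSpace ℝ (Fin n))‖ ^ 2
        - ‖w - (Submodule.orthogonalProjectionOnto Γ w : EuclideanSpace ℝ (Fin n))‖ ^ 2 / η ^ 2 := by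
    field_simp
  have e1 : ‖((Submodule.orthogonalProjectionOnto R) w : EuclideanSpace ℝ (Fin n))‖ = ‖(Submodule.orthogonalProjectionOnto R) w‖ := rfl
  have e2 : ‖((Submodule.orthogonalProjectionOnto Γ) w : EuclideanSpace ℝ (Fin n))‖ = ‖(Submodule.orthogonalProjectionOnto Γ) w‖ := rfl
  rw [e1, e2]
  linarith
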